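/- arXiv:1209.0623 — 3 statements merged into one kernel-verified Lean document; each statement's English description precedes it below -/
import Mathlib

section
/- Let f, g : ℝ³ → ℝ be C¹ and uniformly Lipschitz in the third variable, satisfying the compatibility condition ∂f/∂y + g·∂f/∂Z − ∂g/∂x − f·∂g/∂Z = 0 on ℝ³, and let z₀ ∈ ℝ. Define Z̃₀ : ℝ → ℝ as the solution of the ODE dZ̃₀/dx = f(x, 0, Z̃₀(x)) with Z̃₀(0) = z₀, and for each fixed x̄ define Z̃(x̄, ·) as the solution of dZ̃_{x̄}/dy = g(x̄, y, Z̃_{x̄}(y)) with Z̃_{x̄}(0) = Z̃₀(x̄). Then Z̃ is the unique C² solution of the system ∂Z/∂x = f(x,y,Z), ∂Z/∂y = g(x,y,Z), Z(0,0) = z₀. -/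
open Set Real Filter Metric


lemma gronwallBound_linear' (δ K ε x : ℝ) :
    gronwallBound δ K ε x = δ * gronwallBound 1 K 0 x + ε * gronwallBound 0 K 1 x := by
  by_cases h : K = 0 <;> simp only [gronwallBound, h, if_true, if_false, ite_true, ite_false] <;> ring

lemma gronwallBound_smul' (s δ K ε x : ℝ) :
    gronwallBound (s * δ) K (s * ε) x = s * gronwallBound δ K ε x := by
  by_cases h : K = 0 <;> simp only [gronwallBound, h, if_true, if_false, ite_true, ite_false] <;> ring

lemma gronwallBound_nonneg' {δ K ε x : ℝ} (hδ : 0 ≤ δ) (hK : 0 ≤ K) (hε : 0 ≤ ε) (hx : 0 ≤ x) :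
    0 ≤ gronwallBound δ K ε x := by
  by_cases h : K = 0
  · simp only [gronwallBound, h, ite_true]; nlinarith
  · have hK' : 0 < K := lt_of_le_of_ne hK (Ne.symm h)
    have h1 : (1:ℝ) ≤ Real.exp (K * x) := Real.one_le_exp (by positivity)
    have h2 : 0 ≤ ε / K := by positivity
    simp only [gronwallBound, h, ite_false]
    nlinarith

lemma gronwallBound_mono_x' {δ K ε : ℝ} (hδ : 0 ≤ δ) (hK : 0 ≤ K) (hε : 0 ≤ ε) {x y : ℝ}
    (hxy : x ≤ y) : gronwallBound δ K ε x ≤ gronwallBound δ K ε y := by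
  by_cases h : K = 0
  · simp only [gronwallBound, h, ite_true]; nlinarith
  · have hK' : 0 < K := lt_of_le_of_ne hK (Ne.symm h)
    have hexp : Real.exp (K * x) ≤ Real.exp (K * y) := Real.exp_le_exp.2 (by nlinarith)
    have h2 : 0 ≤ ε / K := by positivity
    simp only [gronwallBound, h, ite_false]
    nlinarith

lemma approx2 {v : ℝ → ℝ → ℝ} {K : NNReal} (hv : ∀ t, LipschitzWith K (v t))
    {F G F' G' : ℝ → ℝ} (hF : ∀ t, HasDerivAt F (F' t) t) (hG : ∀ t, HasDerivAt G (G' t) t)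
    {Y εF εG δ : ℝ} (hY : 0 ≤ Y) (hδ : dist (F 0) (G 0) ≤ δ)
    (hFb : ∀ t ∈ Icc (-Y) Y, dist (F' t) (v t (F t)) ≤ εF)
    (hGb : ∀ t ∈ Icc (-Y) Y, dist (G' t) (v t (G t)) ≤ εG) :
    ∀ t ∈ Icc (-Y) Y, dist (F t) (G t) ≤ gronwallBound δ (K : ℝ) (εF + εG) Y := by
  have h0 : (0:ℝ) ∈ Icc (-Y) Y := ⟨neg_nonpos.2 hY, hY⟩
  have hδ0 : 0 ≤ δ := le_trans dist_nonneg hδ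
  have hεF0 : 0 ≤ εF := le_trans dist_nonneg (hFb 0 h0)
  have hεG0 : 0 ≤ εG := le_trans dist_nonneg (hGb 0 h0)
  intro t ht
  rcases le_or_gt 0 t with h | h
  · have key := dist_le_of_approx_trajectories_ODE (v := v) (K := K) hv (a := 0) (b := t)
      (f := F) (f' := F') (g := G) (g' := G') (εf := εF) (εg := εG) (δ := δ)
      (fun s _ => (hF s).continuousAt.continuousWithinAt)
      (fun s _ => (hF s).hasDerivWithinAt)
      (fun s hs => hFb s ⟨le_trans (neg_nonpos.2 hY) hs.1, le_trans hs.2.le ht.2⟩)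
      (fun s _ => (hG s).continuousAt.continuousWithinAt)
      (fun s _ => (hG s).hasDerivWithinAt)
      (fun s hs => hGb s ⟨le_trans (neg_nonpos.2 hY) hs.1, le_trans hs.2.le ht.2⟩)
      hδ t ⟨h, le_rfl⟩
    refine key.trans ?_
    rw [sub_zero]
    exact gronwallBound_mono_x' hδ0 K.coe_nonneg (add_nonneg hεF0 hεG0) ht.2
  · have hmem : ∀ s, s ∈ Ico (0:ℝ) (-t) → (-s) ∈ Icc (-Y) Y := by
      intro s hs
      constructor
      · nlinarith [hs.2, ht.1]
      · nlinarith [hs.1, hY]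
    have hvneg : ∀ s, LipschitzWith K (fun z => -v (-s) z) := by
      intro s
      apply LipschitzWith.of_dist_le_mul
      intro a b
      show dist (-v (-s) a) (-v (-s) b) ≤ K * dist a b
      rw [dist_neg_neg]
      exact (hv (-s)).dist_le_mul a b
    have hFc : ∀ s, HasDerivAt (fun u => F (-u)) (-F' (-s)) s := by
      intro s
      have := (hF (-s)).comp s (hasDerivAt_neg s)
      simpa [mul_comm, Function.comp_def] using this
    have hGc : ∀ s, HasDerivAt (fun u => G (-u)) (-G' (-s)) s := by
      intro s
      have := (hG (-s)).comp s (hasDerivAt_neg s)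
      simpa [mul_comm, Function.comp_def] using this
    have key := dist_le_of_approx_trajectories_ODE (v := fun s z => -v (-s) z) (K := K)
      hvneg (a := 0) (b := -t)
      (f := fun u => F (-u)) (f' := fun s => -F' (-s))
      (g := fun u => G (-u)) (g' := fun s => -G' (-s)) (εf := εF) (εg := εG) (δ := δ)
      (fun s _ => (hFc s).continuousAt.continuousWithinAt)
      (fun s _ => (hFc s).hasDerivWithinAt)
      (fun s hs => by
        show dist (-F' (-s)) (-v (-s) (F (-s))) ≤ εF
        rw [dist_neg_neg]; exact hFb (-s) (hmem s hs))
      (fun s _ => (hGc s).continuousAt.continuousWithinAt)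
      (fun s _ => (hGc s).hasDerivWithinAt)
      (fun s hs => by
        show dist (-G' (-s)) (-v (-s) (G (-s))) ≤ εG
        rw [dist_neg_neg]; exact hGb (-s) (hmem s hs))
      (by simpa using hδ) (-t) ⟨by linarith, le_rfl⟩
    simp only [neg_neg] at key
    refine key.trans ?_
    rw [sub_zero]
    exact gronwallBound_mono_x' hδ0 K.coe_nonneg (add_nonneg hεF0 hεG0) (by nlinarith [ht.1])

lemma ode_unique_global' {v : ℝ → ℝ → ℝ} {K : NNReal} (hv : ∀ t, LipschitzWith K (v t))
    {F G : ℝ → ℝ} (hF : ∀ t, HasDerivAt F (v t (F t)) t) (hG : ∀ t, HasDerivAt G (v t (G t)) t)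
    (h0 : F 0 = G 0) (t : ℝ) : F t = G t := by
  have ht : t ∈ Ioo (-(|t|+1)) (|t|+1) := by
    constructor
    · nlinarith [neg_abs_le t]
    · nlinarith [le_abs_self t]
  exact ODE_solution_unique_of_mem_Ioo (s := fun _ => (univ : Set ℝ)) (v := v)
    (fun t _ => (hv t).lipschitzOnWith)
    (t₀ := (0:ℝ)) (a := -(|t|+1)) (b := |t|+1)
    (by constructor <;> [nlinarith [abs_nonneg t]; nlinarith [abs_nonneg t]])
    (fun s _ => ⟨hF s, trivial⟩) (fun s _ => ⟨hG s, trivial⟩) h0 ht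


lemma abs_sub_le_of_uIcc {a b u : ℝ} (hu : u ∈ uIcc a b) : |u - a| ≤ |b - a| := by
  rcases le_total a b with h | h
  · rw [uIcc_of_le h] at hu
    rw [abs_of_nonneg (by linarith [hu.1] : (0:ℝ) ≤ u - a), abs_of_nonneg (by linarith : (0:ℝ) ≤ b - a)]
    linarith [hu.2]
  · rw [uIcc_of_ge h] at hu
    rw [abs_of_nonpos (by linarith [hu.2] : u - a ≤ 0), abs_of_nonpos (by linarith : b - a ≤ 0)]
    linarith [hu.1]

lemma hasFDerivAt_of_partials' {h : ℝ × ℝ → ℝ} {hx hy : ℝ × ℝ → ℝ}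
    (Hx : ∀ p : ℝ × ℝ, HasDerivAt (fun u => h (u, p.2)) (hx p) p.1)
    (Hy : ∀ p : ℝ × ℝ, HasDerivAt (fun v => h (p.1, v)) (hy p) p.2)
    (Hxc : Continuous hx) (p : ℝ × ℝ) :
    HasFDerivAt h
      (hx p • ContinuousLinearMap.fst ℝ ℝ ℝ + hy p • ContinuousLinearMap.snd ℝ ℝ ℝ) p := by
  rw [hasFDerivAt_iff_isLittleO_nhds_zero, Asymptotics.isLittleO_iff]
  intro c hc
  have hc2 : 0 < c / 2 := by positivity
  -- vertical smallness
  have hyl := (hasDerivAt_iff_isLittleO.mp (Hy p))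
  rw [Asymptotics.isLittleO_iff] at hyl
  obtain ⟨δ₁, hδ₁pos, hδ₁⟩ := Metric.eventually_nhds_iff.mp (hyl hc2)
  -- continuity of hx at p
  obtain ⟨δ₂, hδ₂pos, hδ₂⟩ := Metric.eventually_nhds_iff.mp
    (Hxc.continuousAt.eventually (Metric.ball_mem_nhds (hx p) hc2) : _)
  rw [Metric.eventually_nhds_iff]
  refine ⟨min δ₁ δ₂, lt_min hδ₁pos hδ₂pos, ?_⟩
  rintro ⟨s, t⟩ hq
  have hqn : dist (s, t) ((0:ℝ), (0:ℝ)) = max |s| |t| := by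
    rw [Prod.dist_eq]; simp [Real.dist_eq]
  rw [show ((0:ℝ×ℝ)) = ((0:ℝ),(0:ℝ)) from rfl, hqn] at hq
  have hs : |s| < min δ₁ δ₂ := lt_of_le_of_lt (le_max_left _ _) hq
  have ht : |t| < min δ₁ δ₂ := lt_of_le_of_lt (le_max_right _ _) hq
  -- B bound
  have hB : ‖h (p.1, p.2 + t) - h p - t * hy p‖ ≤ c / 2 * |t| := by
    have := hδ₁ (show dist (p.2 + t) p.2 < δ₁ by
      rw [Real.dist_eq]; simpa using lt_of_lt_of_le ht (min_le_left _ _))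
    simpa [Real.norm_eq_abs, smul_eq_mul, add_sub_cancel_left] using this
  -- A bound via MVT
  have hA : ‖h (p.1 + s, p.2 + t) - h (p.1, p.2 + t) - s * hx p‖ ≤ c / 2 * |s| := by
    have hder : ∀ u ∈ uIcc p.1 (p.1 + s),
        HasDerivWithinAt (fun u' => h (u', p.2 + t) - u' * hx p)
          (hx (u, p.2 + t) - hx p) (uIcc p.1 (p.1 + s)) u := by
      intro u _
      exact ((Hx (u, p.2 + t)).sub (hasDerivAt_mul_const (hx p))).hasDerivWithinAt
    have hbd : ∀ u ∈ uIcc p.1 (p.1 + s), ‖hx (u, p.2 + t) - hx p‖ ≤ c / 2 := by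
      intro u hu
      have hd : dist (u, p.2 + t) p < δ₂ := by
        have h1 : |u - p.1| ≤ |s| := by simpa using abs_sub_le_of_uIcc hu
        have : dist (u, p.2 + t) p = max |u - p.1| |t| := by
          rw [Prod.dist_eq]; simp [Real.dist_eq]
        rw [this]
        apply max_lt
        · exact lt_of_le_of_lt h1 (lt_of_lt_of_le hs (min_le_right _ _))
        · exact lt_of_lt_of_le ht (min_le_right _ _)
      have := hδ₂ hd
      rw [Real.dist_eq] at this
      rw [Real.norm_eq_abs]
      exact this.le
    have := Convex.norm_image_sub_le_of_norm_hasDerivWithin_le hder hbd (convex_uIcc _ _)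
      (left_mem_uIcc) (right_mem_uIcc)
    calc ‖h (p.1 + s, p.2 + t) - h (p.1, p.2 + t) - s * hx p‖
        = ‖(h (p.1 + s, p.2 + t) - (p.1 + s) * hx p) - (h (p.1, p.2 + t) - p.1 * hx p)‖ := by
          congr 1; ring
      _ ≤ c / 2 * ‖p.1 + s - p.1‖ := this
      _ = c / 2 * |s| := by rw [Real.norm_eq_abs]; congr 1; simp
  -- combine
  have hadd : (p + (s, t)) = (p.1 + s, p.2 + t) := rfl
  rw [hadd]
  have hL : (hx p • ContinuousLinearMap.fst ℝ ℝ ℝ + hy p • ContinuousLinearMap.snd ℝ ℝ ℝ) (s, t)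
      = s * hx p + t * hy p := by
    simp [ContinuousLinearMap.add_apply, ContinuousLinearMap.smul_apply, smul_eq_mul]
    ring
  rw [hL]
  have hnorm : ‖((s, t) : ℝ × ℝ)‖ = max |s| |t| := by
    rw [Prod.norm_def]; simp [Real.norm_eq_abs]
  calc ‖h (p.1 + s, p.2 + t) - h p - (s * hx p + t * hy p)‖
      ≤ ‖h (p.1 + s, p.2 + t) - h (p.1, p.2 + t) - s * hx p‖
        + ‖h (p.1, p.2 + t) - h p - t * hy p‖ := by
        rw [Real.norm_eq_abs, Real.norm_eq_abs, Real.norm_eq_abs]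
        have : h (p.1 + s, p.2 + t) - h p - (s * hx p + t * hy p)
            = (h (p.1 + s, p.2 + t) - h (p.1, p.2 + t) - s * hx p)
              + (h (p.1, p.2 + t) - h p - t * hy p) := by ring
        rw [this]
        exact abs_add_le _ _
    _ ≤ c / 2 * |s| + c / 2 * |t| := add_le_add hA hB
    _ ≤ c * ‖((s, t) : ℝ × ℝ)‖ := by
        rw [hnorm]
        have h1 : |s| ≤ max |s| |t| := le_max_left _ _
        have h2 : |t| ≤ max |s| |t| := le_max_right _ _
        nlinarith

lemma lipx (f g : ℝ → ℝ → ℝ → ℝ) (Kg : NNReal)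
    (hf : ContDiff ℝ 1 (fun p : ℝ × ℝ × ℝ => f p.1 p.2.1 p.2.2))
    (hg : ContDiff ℝ 1 (fun p : ℝ × ℝ × ℝ => g p.1 p.2.1 p.2.2))
    (hKg : ∀ x y, LipschitzWith Kg (fun z => g x y z))
    (Z₀ : ℝ → ℝ) (Ztilde : ℝ → ℝ → ℝ)
    (hZ₀ : ∀ x, HasDerivAt Z₀ (f x 0 (Z₀ x)) x)
    (hvert : ∀ xb y, HasDerivAt (fun v => Ztilde xb v) (g xb y (Ztilde xb y)) y)
    (hvert0 : ∀ xb, Ztilde xb 0 = Z₀ xb) : ∀ x Y : ℝ, 0 ≤ Y → ∃ C : ℝ, 0 ≤ C ∧ ∀ x' : ℝ, |x' - x| ≤ 1 →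
    ∀ y ∈ Icc (-Y) Y, |Ztilde x' y - Ztilde x y| ≤ C * |x' - x| := by
  set F3 : ℝ × ℝ × ℝ → ℝ := fun p => f p.1 p.2.1 p.2.2 with hF3
  set G3 : ℝ × ℝ × ℝ → ℝ := fun p => g p.1 p.2.1 p.2.2 with hG3
  have hGd : Differentiable ℝ G3 := hg.differentiable (by norm_num)
  have sec1 : ∀ (h3 : ℝ × ℝ × ℝ → ℝ), Differentiable ℝ h3 → ∀ x y z : ℝ,
      HasDerivAt (fun u => h3 (u, y, z)) (fderiv ℝ h3 (x, y, z) (1, 0, 0)) x := by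
    intro h3 hd x y z
    exact (hd (x, y, z)).hasFDerivAt.comp_hasDerivAt x
      ((hasDerivAt_id x).prodMk ((hasDerivAt_const x y).prodMk (hasDerivAt_const x z)))
  have hZ₀c : Continuous Z₀ := continuous_iff_continuousAt.2 fun u => (hZ₀ u).continuousAt
  have hZxc : ∀ x, Continuous (fun t => Ztilde x t) :=
    fun x => continuous_iff_continuousAt.2 fun t => (hvert x t).continuousAt
  have happlyG : ∀ w : ℝ × ℝ × ℝ, Continuous (fun p => fderiv ℝ G3 p w) :=
    fun w => (hg.continuous_fderiv (by norm_num)).clm_apply continuous_const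
  intro x Y hY
  -- Z₀ Lipschitz near x
  have hd₀c : ContinuousOn (fun u => f u 0 (Z₀ u)) (Icc (x-1) (x+1)) :=
    (hf.continuous.comp (continuous_id.prodMk (continuous_const.prodMk hZ₀c))).continuousOn
  obtain ⟨L₀, hL₀⟩ := isCompact_Icc.exists_bound_of_continuousOn hd₀c
  have hxmem : x ∈ Icc (x-1) (x+1) := ⟨by linarith, by linarith⟩
  have hL₀0 : 0 ≤ L₀ := le_trans (norm_nonneg _) (hL₀ x hxmem)
  have hZ₀lip : ∀ x', x' ∈ Icc (x-1) (x+1) → |Z₀ x' - Z₀ x| ≤ L₀ * |x' - x| := by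
    intro x' hx'
    have := Convex.norm_image_sub_le_of_norm_hasDerivWithin_le
      (f := Z₀) (f' := fun u => f u 0 (Z₀ u)) (s := Icc (x-1) (x+1))
      (fun u _ => (hZ₀ u).hasDerivWithinAt) hL₀ (convex_Icc _ _) hxmem hx'
    simpa [Real.norm_eq_abs] using this
  -- bound for ∂ₓg along the base trajectory
  set Sc : Set (ℝ × ℝ × ℝ) := (Icc (x-1) (x+1)) ×ˢ ((fun t => (t, Ztilde x t)) '' Icc (-Y) Y)
    with hSc
  have hScomp : IsCompact Sc :=
    isCompact_Icc.prod (isCompact_Icc.image (continuous_id.prodMk (hZxc x)))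
  obtain ⟨Lg, hLg⟩ := hScomp.exists_bound_of_continuousOn ((happlyG (1,0,0)).continuousOn)
  have hScne : (x, 0, Ztilde x 0) ∈ Sc :=
    ⟨hxmem, mem_image_of_mem _ ⟨neg_nonpos.2 hY, hY⟩⟩
  have hLg0 : 0 ≤ Lg := le_trans (norm_nonneg _) (hLg _ hScne)
  have hgx : ∀ x', |x' - x| ≤ 1 → ∀ t ∈ Icc (-Y) Y,
      |g x t (Ztilde x t) - g x' t (Ztilde x t)| ≤ Lg * |x' - x| := by
    intro x' hx' t ht
    have hx'mem : x' ∈ Icc (x-1) (x+1) := by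
      rw [abs_le] at hx'; exact ⟨by linarith [hx'.1], by linarith [hx'.2]⟩
    have := Convex.norm_image_sub_le_of_norm_hasDerivWithin_le
      (f := fun u => G3 (u, t, Ztilde x t))
      (f' := fun u => fderiv ℝ G3 (u, t, Ztilde x t) (1, 0, 0)) (s := Icc (x-1) (x+1))
      (fun u _ => (sec1 G3 hGd u t (Ztilde x t)).hasDerivWithinAt)
      (fun u hu => hLg _ ⟨hu, mem_image_of_mem _ ht⟩) (convex_Icc _ _) hx'mem hxmem
    have h2 : |g x t (Ztilde x t) - g x' t (Ztilde x t)| ≤ Lg * |x - x'| := by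
      simpa [Real.norm_eq_abs] using this
    rw [abs_sub_comm x x'] at h2
    exact h2
  refine ⟨gronwallBound L₀ Kg Lg Y, gronwallBound_nonneg' hL₀0 Kg.coe_nonneg hLg0 hY, ?_⟩
  intro x' hx' y hy
  have hx'mem : x' ∈ Icc (x-1) (x+1) := by
    rw [abs_le] at hx'; exact ⟨by linarith [hx'.1], by linarith [hx'.2]⟩
  have happ := approx2 (v := fun t z => g x' t z) (K := Kg) (fun t => hKg x' t)
    (F := fun t => Ztilde x' t) (F' := fun t => g x' t (Ztilde x' t))
    (G := fun t => Ztilde x t) (G' := fun t => g x t (Ztilde x t))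
    (hvert x') (hvert x) hY
    (δ := L₀ * |x' - x|)
    (by show dist (Ztilde x' 0) (Ztilde x 0) ≤ L₀ * |x' - x|
        rw [Real.dist_eq, hvert0 x', hvert0 x]
        exact hZ₀lip x' hx'mem)
    (εF := 0) (fun t _ => by simp)
    (εG := Lg * |x' - x|) (fun t ht => by
      rw [Real.dist_eq]
      exact hgx x' hx' t ht)
    y hy
  rw [Real.dist_eq, zero_add] at happ
  calc |Ztilde x' y - Ztilde x y| ≤ gronwallBound (L₀ * |x' - x|) (Kg:ℝ) (Lg * |x' - x|) Y :=
        happ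
    _ = gronwallBound (|x' - x| * L₀) (Kg:ℝ) (|x' - x| * Lg) Y := by rw [mul_comm, mul_comm Lg]
    _ = |x' - x| * gronwallBound L₀ (Kg:ℝ) Lg Y := gronwallBound_smul' _ _ _ _ _
    _ = gronwallBound L₀ (Kg:ℝ) Lg Y * |x' - x| := mul_comm _ _

lemma contZjoint (Ztilde : ℝ → ℝ → ℝ)
    (hZxc : ∀ x, Continuous (fun t => Ztilde x t))
    (hlip : ∀ x Y : ℝ, 0 ≤ Y → ∃ C : ℝ, 0 ≤ C ∧ ∀ x' : ℝ, |x' - x| ≤ 1 →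
      ∀ y ∈ Icc (-Y) Y, |Ztilde x' y - Ztilde x y| ≤ C * |x' - x|) :
    Continuous (fun p : ℝ × ℝ => Ztilde p.1 p.2) := by
  rw [continuous_iff_continuousAt]
  rintro ⟨x, y⟩
  rw [Metric.continuousAt_iff]
  intro ε hε
  obtain ⟨C, hC0, hC⟩ := hlip x (|y| + 1) (by positivity)
  obtain ⟨δ₁, hδ₁pos, hδ₁⟩ := Metric.continuousAt_iff.mp (hZxc x).continuousAt
    (ε/2) (by positivity)
  refine ⟨min (min δ₁ 1) (ε/(2*(C+1))), lt_min (lt_min hδ₁pos one_pos) (by positivity), ?_⟩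
  rintro ⟨x', y'⟩ hd
  rw [Prod.dist_eq] at hd
  have hdx : dist x' x < min (min δ₁ 1) (ε/(2*(C+1))) :=
    lt_of_le_of_lt (le_max_left _ _) hd
  have hdy : dist y' y < min (min δ₁ 1) (ε/(2*(C+1))) :=
    lt_of_le_of_lt (le_max_right _ _) hd
  rw [Real.dist_eq] at hdx hdy
  have hx1 : |x' - x| ≤ 1 :=
    le_of_lt (lt_of_lt_of_le hdx (le_trans (min_le_left _ _) (min_le_right _ _)))
  have hy'mem : y' ∈ Icc (-(|y|+1)) (|y|+1) := by
    have h1 : |y' - y| ≤ 1 :=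
      le_of_lt (lt_of_lt_of_le hdy (le_trans (min_le_left _ _) (min_le_right _ _)))
    rw [abs_le] at h1
    constructor
    · nlinarith [neg_abs_le y]
    · nlinarith [le_abs_self y]
  have h2 := hC x' hx1 y' hy'mem
  have h3 : |Ztilde x y' - Ztilde x y| < ε/2 := by
    have := hδ₁ (show dist y' y < δ₁ from
      lt_of_lt_of_le hdy (le_trans (min_le_left _ _) (min_le_left _ _)))
    rwa [Real.dist_eq] at this
  have h4 : C * |x' - x| < ε/2 := by
    have h5 : |x' - x| < ε/(2*(C+1)) := lt_of_lt_of_le hdx (min_le_right _ _)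
    have h6 : C * |x' - x| ≤ C * (ε/(2*(C+1))) := by nlinarith [abs_nonneg (x'-x)]
    have h7 : C * (ε/(2*(C+1))) < ε/2 := by
      rw [← mul_div_assoc, div_lt_div_iff₀ (by positivity) (by norm_num : (0:ℝ) < 2)]
      nlinarith
    linarith
  show dist (Ztilde x' y') (Ztilde x y) < ε
  rw [Real.dist_eq]
  calc |Ztilde x' y' - Ztilde x y|
      ≤ |Ztilde x' y' - Ztilde x y'| + |Ztilde x y' - Ztilde x y| := by
        have : Ztilde x' y' - Ztilde x y
            = (Ztilde x' y' - Ztilde x y') + (Ztilde x y' - Ztilde x y) := by ring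
        rw [this]; exact abs_add_le _ _
    _ < ε := by linarith [le_trans h2 h4.le]

set_option maxHeartbeats 2000000 in
lemma key_hasDerivAt (f g : ℝ → ℝ → ℝ → ℝ) (Kg : NNReal)
    (hf : ContDiff ℝ 1 (fun p : ℝ × ℝ × ℝ => f p.1 p.2.1 p.2.2))
    (hg : ContDiff ℝ 1 (fun p : ℝ × ℝ × ℝ => g p.1 p.2.1 p.2.2))
    (hKg : ∀ x y, LipschitzWith Kg (fun z => g x y z))
    (hcompat : ∀ x y z,
      deriv (fun v => f x v z) y + g x y z * deriv (fun w => f x y w) z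
        - deriv (fun u => g u y z) x - f x y z * deriv (fun w => g x y w) z = 0)
    (Z₀ : ℝ → ℝ) (Ztilde : ℝ → ℝ → ℝ)
    (hZ₀ : ∀ x, HasDerivAt Z₀ (f x 0 (Z₀ x)) x)
    (hvert : ∀ xb y, HasDerivAt (fun v => Ztilde xb v) (g xb y (Ztilde xb y)) y)
    (hvert0 : ∀ xb, Ztilde xb 0 = Z₀ xb)
    (hlip : ∀ x Y : ℝ, 0 ≤ Y → ∃ C : ℝ, 0 ≤ C ∧ ∀ x' : ℝ, |x' - x| ≤ 1 →
      ∀ y ∈ Icc (-Y) Y, |Ztilde x' y - Ztilde x y| ≤ C * |x' - x|) :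
    ∀ x y, HasDerivAt (fun u => Ztilde u y) (f x y (Ztilde x y)) x := by
  set F3 : ℝ × ℝ × ℝ → ℝ := fun p => f p.1 p.2.1 p.2.2 with hF3
  set G3 : ℝ × ℝ × ℝ → ℝ := fun p => g p.1 p.2.1 p.2.2 with hG3
  have hFd : Differentiable ℝ F3 := hf.differentiable (by norm_num)
  have hGd : Differentiable ℝ G3 := hg.differentiable (by norm_num)
  have sec1 : ∀ (h3 : ℝ × ℝ × ℝ → ℝ), Differentiable ℝ h3 → ∀ x y z : ℝ,
      HasDerivAt (fun u => h3 (u, y, z)) (fderiv ℝ h3 (x, y, z) (1, 0, 0)) x := by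
    intro h3 hd x y z
    exact (hd (x, y, z)).hasFDerivAt.comp_hasDerivAt x
      ((hasDerivAt_id x).prodMk ((hasDerivAt_const x y).prodMk (hasDerivAt_const x z)))
  have sec2 : ∀ (h3 : ℝ × ℝ × ℝ → ℝ), Differentiable ℝ h3 → ∀ x y z : ℝ,
      HasDerivAt (fun v => h3 (x, v, z)) (fderiv ℝ h3 (x, y, z) (0, 1, 0)) y := by
    intro h3 hd x y z
    exact (hd (x, y, z)).hasFDerivAt.comp_hasDerivAt y
      ((hasDerivAt_const y x).prodMk ((hasDerivAt_id y).prodMk (hasDerivAt_const y z)))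
  have sec3 : ∀ (h3 : ℝ × ℝ × ℝ → ℝ), Differentiable ℝ h3 → ∀ x y z : ℝ,
      HasDerivAt (fun w => h3 (x, y, w)) (fderiv ℝ h3 (x, y, z) (0, 0, 1)) z := by
    intro h3 hd x y z
    exact (hd (x, y, z)).hasFDerivAt.comp_hasDerivAt z
      ((hasDerivAt_const z x).prodMk ((hasDerivAt_const z y).prodMk (hasDerivAt_id z)))
  have hZxc : ∀ x, Continuous (fun t => Ztilde x t) :=
    fun x => continuous_iff_continuousAt.2 fun t => (hvert x t).continuousAt
  have compat' : ∀ x y z : ℝ,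
      fderiv ℝ F3 (x,y,z) (0,1,0) + g x y z * fderiv ℝ F3 (x,y,z) (0,0,1)
        = fderiv ℝ G3 (x,y,z) (1,0,0) + f x y z * fderiv ℝ G3 (x,y,z) (0,0,1) := by
    intro x y z
    have e1 : deriv (fun v => f x v z) y = fderiv ℝ F3 (x,y,z) (0,1,0) :=
      (sec2 F3 hFd x y z).deriv
    have e2 : deriv (fun w => f x y w) z = fderiv ℝ F3 (x,y,z) (0,0,1) :=
      (sec3 F3 hFd x y z).deriv
    have e3 : deriv (fun u => g u y z) x = fderiv ℝ G3 (x,y,z) (1,0,0) :=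
      (sec1 G3 hGd x y z).deriv
    have e4 : deriv (fun w => g x y w) z = fderiv ℝ G3 (x,y,z) (0,0,1) :=
      (sec3 G3 hGd x y z).deriv
    have := hcompat x y z
    rw [e1, e2, e3, e4] at this
    linarith
  have hGzK : ∀ x y z : ℝ, |fderiv ℝ G3 (x,y,z) (0,0,1)| ≤ (Kg:ℝ) := by
    intro x y z
    have h := (sec3 G3 hGd x y z).hasFDerivAt.le_of_lipschitz (hKg x y)
    rw [ContinuousLinearMap.norm_toSpanSingleton,
      Real.norm_eq_abs] at h
    exact h
  intro x y₀
  set Y : ℝ := |y₀| + 1 with hYdef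
  have hY : (0:ℝ) ≤ Y := by rw [hYdef]; positivity
  have hy₀ : y₀ ∈ Icc (-Y) Y :=
    ⟨by rw [hYdef]; linarith [neg_abs_le y₀], by rw [hYdef]; linarith [le_abs_self y₀]⟩
  obtain ⟨C, hC0, hC⟩ := hlip x Y hY
  obtain ⟨M, hM⟩ := isCompact_Icc.exists_bound_of_continuousOn
    ((hZxc x).continuousOn : ContinuousOn _ (Icc (-Y) Y))
  have hM0 : (0:ℝ) ≤ M := le_trans (norm_nonneg _) (hM 0 ⟨neg_nonpos.2 hY, hY⟩)
  set T : Set (ℝ × ℝ × ℝ) := Icc (x-1) (x+1) ×ˢ (Icc (-Y) Y ×ˢ Icc (-(M+1)) (M+1)) with hT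
  have hTconv : Convex ℝ T := (convex_Icc _ _).prod ((convex_Icc _ _).prod (convex_Icc _ _))
  have hTcomp : IsCompact T := isCompact_Icc.prod (isCompact_Icc.prod isCompact_Icc)
  have hUC := Metric.uniformContinuousOn_iff_le.mp
    (hTcomp.uniformContinuousOn_of_continuous ((hg.continuous_fderiv (by norm_num)).continuousOn))
  have hφd : ∀ t, HasDerivAt (fun t' => f x t' (Ztilde x t'))
      (fderiv ℝ G3 (x, t, Ztilde x t) (1,0,0)
        + f x t (Ztilde x t) * fderiv ℝ G3 (x, t, Ztilde x t) (0,0,1)) t := by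
    intro t
    have h1 : HasDerivAt (fun t' => F3 (x, t', Ztilde x t'))
        (fderiv ℝ F3 (x, t, Ztilde x t) ((0:ℝ), (1:ℝ), g x t (Ztilde x t))) t :=
      (hFd _).hasFDerivAt.comp_hasDerivAt t
        ((hasDerivAt_const t x).prodMk ((hasDerivAt_id t).prodMk (hvert x t)))
    have h2 : fderiv ℝ F3 (x, t, Ztilde x t) ((0:ℝ), (1:ℝ), g x t (Ztilde x t))
        = fderiv ℝ F3 (x,t,Ztilde x t) (0,1,0)
          + g x t (Ztilde x t) * fderiv ℝ F3 (x,t,Ztilde x t) (0,0,1) := by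
      have hvec : ((0:ℝ), (1:ℝ), g x t (Ztilde x t))
          = ((0:ℝ),(1:ℝ),(0:ℝ)) + g x t (Ztilde x t) • ((0:ℝ),(0:ℝ),(1:ℝ)) := by
        simp
      rw [hvec, map_add, map_smul, smul_eq_mul]
    rw [h2, compat' x t (Ztilde x t)] at h1
    exact h1
  rw [hasDerivAt_iff_isLittleO, Asymptotics.isLittleO_iff]
  intro c hc
  set A : ℝ := gronwallBound 1 (Kg:ℝ) 0 Y with hAdef
  set B : ℝ := gronwallBound 0 (Kg:ℝ) 1 Y with hBdef
  have hA : 0 ≤ A := gronwallBound_nonneg' zero_le_one Kg.coe_nonneg le_rfl hY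
  have hB : 0 ≤ B := gronwallBound_nonneg' le_rfl Kg.coe_nonneg zero_le_one hY
  set c₀ : ℝ := c / (2*(A+1)) with hc₀def
  set c₁ : ℝ := c / (2*(B+1)) with hc₁def
  have hc₀ : 0 < c₀ := by rw [hc₀def]; positivity
  have hc₁ : 0 < c₁ := by rw [hc₁def]; positivity
  obtain ⟨δ₀, hδ₀pos, hδ₀⟩ := Metric.eventually_nhds_iff.mp
    (Asymptotics.isLittleO_iff.mp (hasDerivAt_iff_isLittleO.mp (hZ₀ x)) hc₀)
  obtain ⟨δu, hδupos, hδu⟩ := hUC (c₁/(C+1)) (by positivity)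
  rw [Metric.eventually_nhds_iff]
  refine ⟨min (min δ₀ 1) (min (1/(C+1)) (δu/(C+1))),
    lt_min (lt_min hδ₀pos one_pos) (lt_min (by positivity) (by positivity)), ?_⟩
  intro x' hx'
  rw [Real.dist_eq] at hx'
  have hs1 : |x' - x| ≤ 1 :=
    le_of_lt (lt_of_lt_of_le hx' (le_trans (min_le_left _ _) (min_le_right _ _)))
  have hsδ₀ : |x' - x| < δ₀ :=
    lt_of_lt_of_le hx' (le_trans (min_le_left _ _) (min_le_left _ _))
  have hsC : |x' - x| ≤ 1/(C+1) :=
    le_of_lt (lt_of_lt_of_le hx' (le_trans (min_le_right _ _) (min_le_left _ _)))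
  have hsδu : |x' - x| ≤ δu/(C+1) :=
    le_of_lt (lt_of_lt_of_le hx' (le_trans (min_le_right _ _) (min_le_right _ _)))
  have hZd : ∀ t ∈ Icc (-Y) Y, |Ztilde x' t - Ztilde x t| ≤ C * |x' - x| := hC x' hs1
  have hZd1 : ∀ t ∈ Icc (-Y) Y, |Ztilde x' t - Ztilde x t| ≤ 1 := by
    intro t ht
    refine le_trans (hZd t ht) ?_
    calc C * |x' - x| ≤ C * (1/(C+1)) := mul_le_mul_of_nonneg_left hsC hC0
      _ ≤ 1 := by rw [mul_one_div, div_le_one (by positivity)]; linarith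
  have hx'I : x' ∈ Icc (x-1) (x+1) := by
    rw [abs_le] at hs1; exact ⟨by linarith [hs1.1], by linarith [hs1.2]⟩
  have hTx : ∀ t ∈ Icc (-Y) Y, (x, t, Ztilde x t) ∈ T := by
    intro t ht
    refine ⟨⟨by linarith, by linarith⟩, ht, ?_⟩
    have h2 := hM t ht; rw [Real.norm_eq_abs, abs_le] at h2
    exact ⟨by linarith [h2.1], by linarith [h2.2]⟩
  have hTx' : ∀ t ∈ Icc (-Y) Y, (x', t, Ztilde x' t) ∈ T := by
    intro t ht
    refine ⟨hx'I, ht, ?_⟩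
    have h2 := hM t ht; rw [Real.norm_eq_abs, abs_le] at h2
    have h1 := hZd1 t ht; rw [abs_le] at h1
    exact ⟨by linarith [h1.1, h2.1], by linarith [h1.2, h2.2]⟩
  have hR : ∀ t ∈ Icc (-Y) Y,
      |g x' t (Ztilde x' t) - g x t (Ztilde x t)
        - ((x' - x) * fderiv ℝ G3 (x,t,Ztilde x t) (1,0,0)
           + (Ztilde x' t - Ztilde x t) * fderiv ℝ G3 (x,t,Ztilde x t) (0,0,1))|
      ≤ c₁ * |x' - x| := by
    intro t ht
    set p : ℝ×ℝ×ℝ := (x, t, Ztilde x t) with hp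
    set p' : ℝ×ℝ×ℝ := (x', t, Ztilde x' t) with hp'
    have hdpp : dist p' p ≤ (C+1) * |x' - x| := by
      rw [hp, hp', Prod.dist_eq, Prod.dist_eq]
      simp only [Real.dist_eq]
      apply max_le
      · nlinarith [abs_nonneg (x'-x)]
      · apply max_le
        · rw [sub_self, abs_zero]; positivity
        · calc |Ztilde x' t - Ztilde x t| ≤ C * |x' - x| := hZd t ht
            _ ≤ (C+1) * |x' - x| := by nlinarith [abs_nonneg (x'-x)]
    have hbound : ∀ q ∈ closedBall p ((C+1)*|x'-x|) ∩ T,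
        ‖fderiv ℝ G3 q - fderiv ℝ G3 p‖ ≤ c₁/(C+1) := by
      intro q hq
      have hdq : dist q p ≤ δu := by
        calc dist q p ≤ (C+1)*|x'-x| := mem_closedBall.mp hq.1
          _ ≤ (C+1)*(δu/(C+1)) := mul_le_mul_of_nonneg_left hsδu (by linarith)
          _ = δu := by field_simp
      have := hδu q hq.2 p (hTx t ht) hdq
      rwa [dist_eq_norm] at this
    have hmem_p : p ∈ closedBall p ((C+1)*|x'-x|) ∩ T :=
      ⟨mem_closedBall_self (by positivity), hTx t ht⟩
    have hmem_p' : p' ∈ closedBall p ((C+1)*|x'-x|) ∩ T :=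
      ⟨mem_closedBall.2 hdpp, hTx' t ht⟩
    have hmvt := Convex.norm_image_sub_le_of_norm_hasFDerivWithin_le'
      (f := G3) (f' := fun q => fderiv ℝ G3 q) (φ := fderiv ℝ G3 p)
      (s := closedBall p ((C+1)*|x'-x|) ∩ T) (C := c₁/(C+1))
      (fun q _ => (hGd q).hasFDerivAt.hasFDerivWithinAt) hbound
      ((convex_closedBall _ _).inter hTconv) hmem_p hmem_p'
    have happ : (fderiv ℝ G3 p) (p' - p)
        = (x' - x) * fderiv ℝ G3 p (1,0,0)
          + (Ztilde x' t - Ztilde x t) * fderiv ℝ G3 p (0,0,1) := by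
      have hvec : p' - p = (x' - x) • ((1:ℝ),(0:ℝ),(0:ℝ))
          + (Ztilde x' t - Ztilde x t) • ((0:ℝ),(0:ℝ),(1:ℝ)) := by
        rw [hp, hp']
        simp [Prod.ext_iff]
      rw [hvec, map_add, map_smul, map_smul, smul_eq_mul, smul_eq_mul]
    have hnorm_eq : |g x' t (Ztilde x' t) - g x t (Ztilde x t)
        - ((x' - x) * fderiv ℝ G3 (x,t,Ztilde x t) (1,0,0)
           + (Ztilde x' t - Ztilde x t) * fderiv ℝ G3 (x,t,Ztilde x t) (0,0,1))|
        = ‖G3 p' - G3 p - (fderiv ℝ G3 p) (p' - p)‖ := by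
      rw [happ, Real.norm_eq_abs]
    rw [hnorm_eq]
    calc ‖G3 p' - G3 p - (fderiv ℝ G3 p) (p' - p)‖
        ≤ c₁/(C+1) * ‖p' - p‖ := hmvt
      _ ≤ c₁/(C+1) * ((C+1)*|x'-x|) := by
          apply mul_le_mul_of_nonneg_left _ (by positivity)
          rw [← dist_eq_norm]; exact hdpp
      _ = c₁ * |x'-x| := by field_simp <;> ring
  have hGzlip : ∀ t, LipschitzWith Kg
      (fun z => fderiv ℝ G3 (x,t,Ztilde x t) (0,0,1) * z) := by
    intro t
    apply LipschitzWith.of_dist_le_mul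
    intro a b
    show dist (fderiv ℝ G3 (x,t,Ztilde x t) (0,0,1) * a)
      (fderiv ℝ G3 (x,t,Ztilde x t) (0,0,1) * b) ≤ (Kg:ℝ) * dist a b
    rw [Real.dist_eq, Real.dist_eq, ← mul_sub, abs_mul]
    exact mul_le_mul_of_nonneg_right (hGzK x t (Ztilde x t)) (abs_nonneg _)
  have hDd : ∀ t, HasDerivAt
      (fun t' => Ztilde x' t' - Ztilde x t' - (x'-x) * (f x t' (Ztilde x t')))
      (g x' t (Ztilde x' t) - g x t (Ztilde x t)
        - (x'-x) * (fderiv ℝ G3 (x,t,Ztilde x t) (1,0,0)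
            + f x t (Ztilde x t) * fderiv ℝ G3 (x,t,Ztilde x t) (0,0,1))) t :=
    fun t => ((hvert x' t).sub (hvert x t)).sub ((hφd t).const_mul (x'-x))
  have hδval : dist (Ztilde x' 0 - Ztilde x 0 - (x'-x) * f x 0 (Ztilde x 0)) (0:ℝ)
      ≤ c₀ * |x'-x| := by
    rw [dist_zero_right, hvert0 x', hvert0 x]
    have := hδ₀ (show dist x' x < δ₀ by rw [Real.dist_eq]; exact hsδ₀)
    simpa [Real.norm_eq_abs, smul_eq_mul] using this
  have hFb : ∀ t ∈ Icc (-Y) Y,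
      dist (g x' t (Ztilde x' t) - g x t (Ztilde x t)
        - (x'-x) * (fderiv ℝ G3 (x,t,Ztilde x t) (1,0,0)
            + f x t (Ztilde x t) * fderiv ℝ G3 (x,t,Ztilde x t) (0,0,1)))
        (fderiv ℝ G3 (x,t,Ztilde x t) (0,0,1)
          * (Ztilde x' t - Ztilde x t - (x'-x) * f x t (Ztilde x t)))
      ≤ c₁ * |x'-x| := by
    intro t ht
    rw [Real.dist_eq]
    have heq : g x' t (Ztilde x' t) - g x t (Ztilde x t)
        - (x'-x) * (fderiv ℝ G3 (x,t,Ztilde x t) (1,0,0)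
            + f x t (Ztilde x t) * fderiv ℝ G3 (x,t,Ztilde x t) (0,0,1))
        - fderiv ℝ G3 (x,t,Ztilde x t) (0,0,1)
          * (Ztilde x' t - Ztilde x t - (x'-x) * f x t (Ztilde x t))
        = g x' t (Ztilde x' t) - g x t (Ztilde x t)
        - ((x' - x) * fderiv ℝ G3 (x,t,Ztilde x t) (1,0,0)
           + (Ztilde x' t - Ztilde x t) * fderiv ℝ G3 (x,t,Ztilde x t) (0,0,1)) := by ring
    rw [heq]
    exact hR t ht
  have hGb : ∀ t ∈ Icc (-Y) Y, dist (0:ℝ)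
      (fderiv ℝ G3 (x,t,Ztilde x t) (0,0,1) * 0) ≤ (0:ℝ) := by
    intro t _; simp
  have happx := approx2 (v := fun t z => fderiv ℝ G3 (x,t,Ztilde x t) (0,0,1) * z)
    (K := Kg) hGzlip
    (F := fun t' => Ztilde x' t' - Ztilde x t' - (x'-x) * f x t' (Ztilde x t'))
    (F' := fun t => g x' t (Ztilde x' t) - g x t (Ztilde x t)
        - (x'-x) * (fderiv ℝ G3 (x,t,Ztilde x t) (1,0,0)
            + f x t (Ztilde x t) * fderiv ℝ G3 (x,t,Ztilde x t) (0,0,1)))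
    (G := fun _ => (0:ℝ)) (G' := fun _ => (0:ℝ))
    hDd (fun t => hasDerivAt_const t 0)
    hY hδval hFb hGb y₀ hy₀
  have hfinal : gronwallBound (c₀*|x'-x|) (Kg:ℝ) (c₁*|x'-x| + 0) Y ≤ c * |x'-x| := by
    rw [add_zero, gronwallBound_linear', ← hAdef, ← hBdef]
    have h1 : c₀ * A ≤ c/2 := by
      rw [hc₀def, div_mul_eq_mul_div, div_le_iff₀ (by positivity : (0:ℝ) < 2*(A+1))]
      nlinarith
    have h2 : c₁ * B ≤ c/2 := by
      rw [hc₁def, div_mul_eq_mul_div, div_le_iff₀ (by positivity : (0:ℝ) < 2*(B+1))]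
      nlinarith
    have habs : 0 ≤ |x'-x| := abs_nonneg _
    calc c₀*|x'-x| * A + c₁*|x'-x| * B = (c₀*A + c₁*B) * |x'-x| := by ring
      _ ≤ c * |x'-x| := by nlinarith
  have hdone := le_trans happx hfinal
  show ‖Ztilde x' y₀ - Ztilde x y₀ - (x' - x) • f x y₀ (Ztilde x y₀)‖ ≤ c * ‖x' - x‖
  simpa [dist_zero_right, smul_eq_mul, Real.norm_eq_abs] using hdone

lemma smooth2 (f g : ℝ → ℝ → ℝ → ℝ)
    (hf : ContDiff ℝ 1 (fun p : ℝ × ℝ × ℝ => f p.1 p.2.1 p.2.2))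
    (hg : ContDiff ℝ 1 (fun p : ℝ × ℝ × ℝ => g p.1 p.2.1 p.2.2))
    (Ztilde : ℝ → ℝ → ℝ)
    (hvert : ∀ xb y, HasDerivAt (fun v => Ztilde xb v) (g xb y (Ztilde xb y)) y)
    (hhor : ∀ x y, HasDerivAt (fun u => Ztilde u y) (f x y (Ztilde x y)) x)
    (contZ : Continuous (fun p : ℝ × ℝ => Ztilde p.1 p.2)) : ContDiff ℝ 2 (fun p : ℝ × ℝ => Ztilde p.1 p.2) := by
  set Zf : ℝ × ℝ → ℝ := fun p => Ztilde p.1 p.2 with hZf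
  set px : ℝ × ℝ → ℝ := fun p => f p.1 p.2 (Ztilde p.1 p.2) with hpx
  set py : ℝ × ℝ → ℝ := fun p => g p.1 p.2 (Ztilde p.1 p.2) with hpy
  have hinner : Continuous (fun p : ℝ × ℝ => (p.1, p.2, Zf p)) :=
    continuous_fst.prodMk (continuous_snd.prodMk contZ)
  have hpxc : Continuous px := hf.continuous.comp hinner
  have hpyc : Continuous py := hg.continuous.comp hinner
  have hFD : ∀ p : ℝ × ℝ, HasFDerivAt Zf
      (px p • ContinuousLinearMap.fst ℝ ℝ ℝ + py p • ContinuousLinearMap.snd ℝ ℝ ℝ) p := by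
    apply hasFDerivAt_of_partials'
    · intro p; exact hhor p.1 p.2
    · intro p; exact hvert p.1 p.2
    · exact hpxc
  have hdiff : Differentiable ℝ Zf := fun p => (hFD p).differentiableAt
  have hfderiv : (fderiv ℝ Zf) = fun p =>
      px p • ContinuousLinearMap.fst ℝ ℝ ℝ + py p • ContinuousLinearMap.snd ℝ ℝ ℝ :=
    funext fun p => (hFD p).fderiv
  have hZ1 : ContDiff ℝ 1 Zf := by
    rw [contDiff_one_iff_fderiv]
    refine ⟨hdiff, ?_⟩
    rw [hfderiv]
    exact (hpxc.smul continuous_const).add (hpyc.smul continuous_const)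
  have hinner1 : ContDiff ℝ 1 (fun p : ℝ × ℝ => (p.1, p.2, Zf p)) :=
    contDiff_fst.prodMk (contDiff_snd.prodMk hZ1)
  have hpx1 : ContDiff ℝ 1 px := hf.comp hinner1
  have hpy1 : ContDiff ℝ 1 py := hg.comp hinner1
  have h2 : (2 : WithTop ℕ∞) = 1 + 1 := by norm_num
  rw [h2, contDiff_succ_iff_fderiv]
  refine ⟨hdiff, by simp, ?_⟩
  rw [hfderiv]
  exact (hpx1.smul contDiff_const).add (hpy1.smul contDiff_const)
lemma unique_sol (f g : ℝ → ℝ → ℝ → ℝ) (z₀ : ℝ) (Kf Kg : NNReal)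
    (hKf : ∀ x y, LipschitzWith Kf (fun z => f x y z))
    (hKg : ∀ x y, LipschitzWith Kg (fun z => g x y z))
    (Z₀ : ℝ → ℝ) (Ztilde : ℝ → ℝ → ℝ)
    (hZ₀ : ∀ x, HasDerivAt Z₀ (f x 0 (Z₀ x)) x)
    (hZ₀0 : Z₀ 0 = z₀)
    (hvert : ∀ xb y, HasDerivAt (fun v => Ztilde xb v) (g xb y (Ztilde xb y)) y)
    (hvert0 : ∀ xb, Ztilde xb 0 = Z₀ xb) : ∀ W : ℝ → ℝ → ℝ,
    ContDiff ℝ 2 (fun p : ℝ × ℝ => W p.1 p.2) →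
    (∀ x y, deriv (fun u => W u y) x = f x y (W x y)) →
    (∀ x y, deriv (fun v => W x v) y = g x y (W x y)) →
    W 0 0 = z₀ → W = Ztilde := by
  intro W hW hWx hWy hW00
  have hWd : Differentiable ℝ (fun p : ℝ × ℝ => W p.1 p.2) :=
    hW.differentiable (by norm_num)
  have hWdx : ∀ x y, HasDerivAt (fun u => W u y) (f x y (W x y)) x := by
    intro x y
    have hdiff : DifferentiableAt ℝ (fun u => W u y) x :=
      ((hWd (x, y)).comp x ((differentiableAt_fun_id (𝕜 := ℝ) (x := x)).prodMk (differentiableAt_const (𝕜 := ℝ) (x := x) y)) :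
        DifferentiableAt ℝ ((fun p : ℝ × ℝ => W p.1 p.2) ∘ fun u => (u, y)) x)
    have := hdiff.hasDerivAt
    rwa [hWx x y] at this
  have hWdy : ∀ x y, HasDerivAt (fun v => W x v) (g x y (W x y)) y := by
    intro x y
    have hdiff : DifferentiableAt ℝ (fun v => W x v) y :=
      (hWd (x, y)).comp y ((differentiableAt_const x).prodMk differentiableAt_fun_id)
    have := hdiff.hasDerivAt
    rwa [hWy x y] at this
  have hW0 : ∀ x, W x 0 = Z₀ x := by
    intro x
    exact ode_unique_global' (v := fun u z => f u 0 z) (K := Kf) (fun u => hKf u 0)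
      (F := fun u => W u 0) (G := Z₀) (fun u => hWdx u 0) hZ₀ (by show W 0 0 = Z₀ 0; rw [hW00, hZ₀0]) x
  funext x y
  exact ode_unique_global' (v := fun t z => g x t z) (K := Kg) (fun t => hKg x t)
    (F := fun v => W x v) (G := fun v => Ztilde x v) (hWdy x) (hvert x)
    (by show W x 0 = Ztilde x 0; rw [hW0 x, hvert0 x]) y


/-- The solution of the compatible system of two first-order PDEs may be constructed
by integrating two successive ODEs: first `dZ̃₀/dx = f(x,0,Z̃₀)` along the x-axis with
`Z̃₀(0) = z₀`, then for each fixed `xb`, `dZ̃_{xb}/dy = g(xb,y,Z̃_{xb})` with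
`Z̃_{xb}(0) = Z̃₀(xb)`.  The resulting function `Z̃` is the unique C² solution of the
system `∂Z/∂x = f(x,y,Z)`, `∂Z/∂y = g(x,y,Z)`, `Z(0,0) = z₀`. -/
theorem solution_by_successive_ODEs
    (f g : ℝ → ℝ → ℝ → ℝ) (z₀ : ℝ)
    (hf : ContDiff ℝ 1 (fun p : ℝ × ℝ × ℝ => f p.1 p.2.1 p.2.2))
    (hg : ContDiff ℝ 1 (fun p : ℝ × ℝ × ℝ => g p.1 p.2.1 p.2.2))
    (hfLip : ∃ K : NNReal, ∀ x y, LipschitzWith K (fun z => f x y z))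
    (hgLip : ∃ K : NNReal, ∀ x y, LipschitzWith K (fun z => g x y z))
    (hcompat : ∀ x y z,
      deriv (fun v => f x v z) y + g x y z * deriv (fun w => f x y w) z
        - deriv (fun u => g u y z) x - f x y z * deriv (fun w => g x y w) z = 0)
    (Z₀ : ℝ → ℝ) (Ztilde : ℝ → ℝ → ℝ)
    (hZ₀ : ∀ x, HasDerivAt Z₀ (f x 0 (Z₀ x)) x)
    (hZ₀0 : Z₀ 0 = z₀)
    (hvert : ∀ xb y, HasDerivAt (fun v => Ztilde xb v) (g xb y (Ztilde xb y)) y)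
    (hvert0 : ∀ xb, Ztilde xb 0 = Z₀ xb) :
    (ContDiff ℝ 2 (fun p : ℝ × ℝ => Ztilde p.1 p.2)
      ∧ (∀ x y, deriv (fun u => Ztilde u y) x = f x y (Ztilde x y))
      ∧ (∀ x y, deriv (fun v => Ztilde x v) y = g x y (Ztilde x y))
      ∧ Ztilde 0 0 = z₀)
    ∧ ∀ W : ℝ → ℝ → ℝ,
        ContDiff ℝ 2 (fun p : ℝ × ℝ => W p.1 p.2) →
        (∀ x y, deriv (fun u => W u y) x = f x y (W x y)) →
        (∀ x y, deriv (fun v => W x v) y = g x y (W x y)) →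
        W 0 0 = z₀ → W = Ztilde := by
  obtain ⟨Kf, hKf⟩ := hfLip
  obtain ⟨Kg, hKg⟩ := hgLip
  have hlip := lipx f g Kg hf hg hKg Z₀ Ztilde hZ₀ hvert hvert0
  have hZxc : ∀ x, Continuous (fun t => Ztilde x t) :=
    fun x => continuous_iff_continuousAt.2 fun t => (hvert x t).continuousAt
  have contZ := contZjoint Ztilde hZxc hlip
  have hhor := key_hasDerivAt f g Kg hf hg hKg hcompat Z₀ Ztilde hZ₀ hvert hvert0 hlip
  exact ⟨⟨smooth2 f g hf hg Ztilde hvert hhor contZ, fun x y => (hhor x y).deriv,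
    fun x y => (hvert x y).deriv, (hvert0 0).trans hZ₀0⟩,
    unique_sol f g z₀ Kf Kg hKf hKg Z₀ Ztilde hZ₀ hZ₀0 hvert hvert0⟩
end

section
/- Let μ : [0,T]×ℝ → ℝ be C¹ and σ : [0,T]×ℝ → ℝ∖{0} be C², let F, G : [0,T] → ℝ be C¹ with G nowhere zero, and define f(t,x,Z) = μ(t,Z) − (1/2)σ(t,Z)·∂σ/∂Z(t,Z) − (F(t)/G(t))·σ(t,Z) and g(t,x,Z) = σ(t,Z)/G(t). If the integration condition ∂μ/∂Z − (μ/σ)·∂σ/∂Z − (1/σ)·∂σ/∂t − (σ/2)·∂²σ/∂Z² = −G′(t)/G(t) holds for all (t,Z), then f and g satisfy the compatibility condition ∂f/∂x + g·∂f/∂Z − ∂g/∂t − f·∂g/∂Z = 0 on [0,T]×ℝ×ℝ. -/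
/-- If `f(t,x,Z) = μ(t,Z) − ½σ(t,Z)∂σ/∂Z(t,Z) − (F(t)/G(t))σ(t,Z)` and
`g(t,x,Z) = σ(t,Z)/G(t)`, and the integration condition
`∂μ/∂Z − (μ/σ)∂σ/∂Z − (1/σ)∂σ/∂t − (σ/2)∂²σ/∂Z² = −G′/G` holds, then `f` and `g`
satisfy the Frobenius compatibility condition `∂f/∂x + g∂f/∂Z − ∂g/∂t − f∂g/∂Z = 0`
on `[0,T]×ℝ×ℝ`. -/
theorem compatibility_of_induced_system
    (T : ℝ) (hT : 0 < T)
    (μ σ : ℝ → ℝ → ℝ) (F G : ℝ → ℝ) (f g : ℝ → ℝ → ℝ → ℝ)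
    (hμ : ContDiff ℝ 1 (fun p : ℝ × ℝ => μ p.1 p.2))
    (hσ : ContDiff ℝ 2 (fun p : ℝ × ℝ => σ p.1 p.2))
    (hσne : ∀ t Z, σ t Z ≠ 0)
    (hF : ContDiff ℝ 1 F) (hG : ContDiff ℝ 1 G) (hGne : ∀ t, G t ≠ 0)
    (hfdef : ∀ t x Z, f t x Z
      = μ t Z - (1/2) * σ t Z * deriv (fun w => σ t w) Z - (F t / G t) * σ t Z)
    (hgdef : ∀ t x Z, g t x Z = σ t Z / G t)
    (hcond : ∀ t ∈ Set.Icc 0 T, ∀ Z : ℝ,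
      deriv (fun w => μ t w) Z
        - (μ t Z / σ t Z) * deriv (fun w => σ t w) Z
        - (1 / σ t Z) * deriv (fun s => σ s Z) t
        - (σ t Z / 2) * deriv (fun w => deriv (fun w' => σ t w') w) Z
      = - deriv G t / G t) :
    ∀ t ∈ Set.Icc 0 T, ∀ x Z : ℝ,
      deriv (fun u => f t u Z) x
        + g t x Z * deriv (fun w => f t x w) Z
        - deriv (fun s => g s x Z) t
        - f t x Z * deriv (fun w => g t x w) Z = 0 := by
  intro t ht x Z
  set S : ℝ × ℝ → ℝ := fun p => σ p.1 p.2 with hSdef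
  set M : ℝ × ℝ → ℝ := fun p => μ p.1 p.2 with hMdef
  have hSdiff : Differentiable ℝ S := hσ.differentiable two_ne_zero
  have hMdiff : Differentiable ℝ M := hμ.differentiable one_ne_zero
  have hGdiff : Differentiable ℝ G := hG.differentiable one_ne_zero
  -- curves
  have curveZ : ∀ s w : ℝ, HasDerivAt (fun v : ℝ => ((s, v) : ℝ × ℝ)) (0, 1) w := by
    intro s w
    simpa using (HasDerivAt.prodMk (hasDerivAt_const w s) (hasDerivAt_id w))
  have curveT : ∀ w s : ℝ, HasDerivAt (fun v : ℝ => ((v, w) : ℝ × ℝ)) (1, 0) s := by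
    intro w s
    simpa using (HasDerivAt.prodMk (hasDerivAt_id s) (hasDerivAt_const s w))
  -- partial derivatives of σ and μ
  set σZ : ℝ → ℝ → ℝ := fun s w => fderiv ℝ S (s, w) (0, 1) with hσZdef
  have hσZ : ∀ s w : ℝ, HasDerivAt (fun v => σ s v) (σZ s w) w := by
    intro s w
    exact (hSdiff (s, w)).hasFDerivAt.comp_hasDerivAt w (curveZ s w)
  have hderivσZ : ∀ s w : ℝ, deriv (fun v => σ s v) w = σZ s w :=
    fun s w => (hσZ s w).deriv
  set σT : ℝ := fderiv ℝ S (t, Z) (1, 0) with hσTdef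
  have hσT : HasDerivAt (fun s => σ s Z) σT t :=
    by have := (hSdiff (t, Z)).hasFDerivAt.comp_hasDerivAt t (curveT Z t); exact this
  set μZ : ℝ := fderiv ℝ M (t, Z) (0, 1) with hμZdef
  have hμZ : HasDerivAt (fun v => μ t v) μZ Z :=
    (hMdiff (t, Z)).hasFDerivAt.comp_hasDerivAt Z (curveZ t Z)
  -- second derivative of σ in Z
  have hσZC1 : ContDiff ℝ 1 (fun p : ℝ × ℝ => σZ p.1 p.2) := by
    have := (hσ.fderiv_right (m := 1) le_rfl).clm_apply
      (contDiff_const (c := ((0 : ℝ), (1 : ℝ))))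
    exact this
  have hσZt_diff : Differentiable ℝ (fun v => σZ t v) :=
    by have := (hσZC1.differentiable one_ne_zero).comp ((differentiable_const t).prodMk differentiable_id); exact this
  set c : ℝ := deriv (fun v => σZ t v) Z with hcdef
  have hσZZ : HasDerivAt (fun v => σZ t v) c Z := (hσZt_diff Z).hasDerivAt
  -- the four derivatives in the goal
  have h1 : deriv (fun u => f t u Z) x = 0 := by
    simp only [hfdef]; exact deriv_const _ _
  have hfun2 : (fun w => f t x w)
      = fun w => μ t w - 1/2 * σ t w * σZ t w - F t / G t * σ t w := by
    funext w; rw [hfdef, hderivσZ]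
  have h2 : deriv (fun w => f t x w)
      = fun Z' => deriv (fun w => μ t w - 1/2 * σ t w * σZ t w - F t / G t * σ t w) Z' := by
    rw [hfun2]
  have hd2 : HasDerivAt (fun w => μ t w - 1/2 * σ t w * σZ t w - F t / G t * σ t w)
      (μZ - (1/2 * σZ t Z * σZ t Z + 1/2 * σ t Z * c) - F t / G t * σZ t Z) Z := by
    exact (hμZ.sub (((hσZ t Z).const_mul (1/2)).mul hσZZ)).sub ((hσZ t Z).const_mul (F t / G t))
  have h2' : deriv (fun w => f t x w) Z
      = μZ - (1/2 * σZ t Z * σZ t Z + 1/2 * σ t Z * c) - F t / G t * σZ t Z := by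
    rw [hfun2]; exact hd2.deriv
  have hfun3 : (fun s => g s x Z) = fun s => σ s Z / G s := funext fun s => hgdef s x Z
  have h3 : deriv (fun s => g s x Z) t = (σT * G t - σ t Z * deriv G t) / (G t) ^ 2 := by
    rw [hfun3]
    exact (hσT.div ((hGdiff t).hasDerivAt) (hGne t)).deriv
  have hfun4 : (fun w => g t x w) = fun w => σ t w / G t := funext fun w => hgdef t x w
  have h4 : deriv (fun w => g t x w) Z = σZ t Z / G t := by
    rw [hfun4]; exact ((hσZ t Z).div_const (G t)).deriv
  -- rewrite the integration condition
  have hcond' := hcond t ht Z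
  rw [hderivσZ, hμZ.deriv, hσT.deriv] at hcond'
  have hcc : deriv (fun w => deriv (fun w' => σ t w') w) Z = c := by
    have : (fun w => deriv (fun w' => σ t w') w) = fun w => σZ t w :=
      funext fun w => hderivσZ t w
    rw [this]
  rw [hcc] at hcond'
  -- finish
  rw [h1, h2', h3, h4, hfdef, hgdef, hderivσZ]
  have hσ0 := hσne t Z
  have hG0 := hGne t
  field_simp at hcond' ⊢
  linear_combination hcond'
end

section
/- Let σ : ℝ → ℝ be C² and nowhere zero, let c ∈ ℝ, and define μ : ℝ → ℝ by μ(X) = ((1/2)σ′(X) + c)·σ(X). Then μ and σ satisfy σ(X)·μ′(X) − μ(X)·σ′(X) − (σ(X)²/2)·σ″(X) = 0 for all X ∈ ℝ. Conversely, if μ : ℝ → ℝ is C¹ and satisfies σ·μ′ − μ·σ′ − (σ²/2)·σ″ = 0 everywhere, then there exists a constant c ∈ ℝ such that μ(X) = ((1/2)σ′(X) + c)·σ(X) for all X. -/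
/-- Autonomous integration condition: for `σ` of class C², nowhere zero, the drift
`μ(X) = (½σ′(X) + c)σ(X)` satisfies `σμ′ − μσ′ − (σ²/2)σ″ = 0`; conversely every C¹
drift satisfying this identity is of that form for some constant `c`. -/
theorem autonomous_integration_condition
    (σ : ℝ → ℝ) (hσ : ContDiff ℝ 2 σ) (hσne : ∀ X, σ X ≠ 0) :
    (∀ c : ℝ, ∀ X : ℝ,
      σ X * deriv (fun Y => ((1/2) * deriv σ Y + c) * σ Y) X
        - ((1/2) * deriv σ X + c) * σ X * deriv σ X
        - (σ X)^2 / 2 * deriv (deriv σ) X = 0)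
    ∧ ∀ μ : ℝ → ℝ, ContDiff ℝ 1 μ →
        (∀ X : ℝ,
          σ X * deriv μ X - μ X * deriv σ X - (σ X)^2 / 2 * deriv (deriv σ) X = 0) →
        ∃ c : ℝ, ∀ X : ℝ, μ X = ((1/2) * deriv σ X + c) * σ X := by
  have hσd : Differentiable ℝ σ := hσ.differentiable (by norm_num)
  have hσ' : ContDiff ℝ 1 (deriv σ) := ((contDiff_succ_iff_deriv.mp (by exact_mod_cast hσ : ContDiff ℝ (1+1) σ)).2.2)
  have hσ'd : Differentiable ℝ (deriv σ) := hσ'.differentiable one_ne_zero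
  constructor
  · intro c X
    have h1 : HasDerivAt (fun Y => ((1/2) * deriv σ Y + c) * σ Y)
        (((1/2) * deriv (deriv σ) X) * σ X + ((1/2) * deriv σ X + c) * deriv σ X) X := by
      exact ((((hσ'd X).hasDerivAt.const_mul (1/2:ℝ)).add_const c).mul (hσd X).hasDerivAt)
    rw [h1.deriv]; ring
  · intro μ hμ hcond
    have hμd : Differentiable ℝ μ := hμ.differentiable one_ne_zero
    set f : ℝ → ℝ := fun X => μ X / σ X - (1/2) * deriv σ X with hf
    have hfd : ∀ X, HasDerivAt f 0 X := by
      intro X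
      have h1 : HasDerivAt f
          ((deriv μ X * σ X - μ X * deriv σ X) / (σ X)^2 - (1/2) * deriv (deriv σ) X) X :=
        (((hμd X).hasDerivAt.div (hσd X).hasDerivAt (hσne X)).sub
          (((hσ'd X).hasDerivAt.const_mul (1/2:ℝ))))
      convert h1 using 1
      have := hcond X
      have hs := hσne X
      field_simp at this ⊢
      nlinarith [this]
    refine ⟨f 0, fun X => ?_⟩
    have hconst : f X = f 0 :=
      is_const_of_deriv_eq_zero (fun x => (hfd x).differentiableAt)
        (fun x => (hfd x).deriv) X 0
    have h2 : μ X / σ X - (1/2) * deriv σ X = f 0 := hconst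
    have hs := hσne X
    field_simp at h2
    field_simp
    linarith
end
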